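/- Let n ≥ 2, let 1 < p, q < ∞, let u, v be weights with v > 0 almost everywhere, and set w = v^{−p'/p}. Suppose there is a constant C such that u(R°)^{1/q} · w(nR)^{1/p'} ≤ C and u(nR)^{1/q} · w(R°)^{1/p'} ≤ C for every rectanguloid R centered at the origin. Then there is a constant C' such that u(S°)^{1/q} · w(√n S)^{1/p'} ≤ C' and u(√n S)^{1/q} · w(S°)^{1/p'} ≤ C' for every ellipsoid S centered at the origin. -/

import Mathlib

open MeasureTheory ENNReal Set Bornology Pointwise

noncomputable section

abbrev Euc (n : ℕ) := EuclideanSpace ℝ (Fin n)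

/-- The Fourier transform `f̂(z) = ∫ f(x) e^{-i x·z} dx`. -/
def ftrans {n : ℕ} (f : Euc n → ℂ) (z : Euc n) : ℂ :=
  ∫ x : Euc n, f x * Complex.exp (-(Complex.I * ((inner ℝ x z : ℝ) : ℂ)))

/-- A weight: nonnegative, measurable, locally integrable. -/
def IsWeight {n : ℕ} (u : Euc n → ℝ) : Prop :=
  Measurable u ∧ (∀ x, 0 ≤ u x) ∧ LocallyIntegrable u volume

/-- `u(A) = ∫_A u`, as a value in `ℝ≥0∞`. -/
def wMeas {n : ℕ} (u : Euc n → ℝ) (A : Set (Euc n)) : ℝ≥0∞ :=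
  ∫⁻ x in A, ENNReal.ofReal (u x)

/-- The polarSet of a set: `E° = {z : |x·z| ≤ 1 for all x ∈ E}`. -/
def polarSet {n : ℕ} (E : Set (Euc n)) : Set (Euc n) :=
  {z | ∀ x ∈ E, |(inner ℝ x z : ℝ)| ≤ 1}

/-- The setTranslate `E + τ` of a set. -/
def setTranslate {n : ℕ} (τ : Euc n) (E : Set (Euc n)) : Set (Euc n) :=
  (fun x => x + τ) '' E

/-- Conjugate exponent `p' = p/(p-1)`. -/
def rconj (p : ℝ) : ℝ := p / (p - 1)

/-- The weight `w = v^{-p'/p}`. -/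
def wFun {n : ℕ} (p : ℝ) (v : Euc n → ℝ) : Euc n → ℝ :=
  fun x => v x ^ (-(rconj p) / p)

/-- The weighted Fourier inequality class `Fourier(p,q)`. -/
def FourierPQ {n : ℕ} (p q : ℝ) (u v : Euc n → ℝ) : Prop :=
  ∃ C : ℝ, 0 < C ∧ ∀ f : Euc n → ℂ, Integrable f →
    (∫⁻ z, (‖ftrans f z‖₊ : ℝ≥0∞) ^ q * ENNReal.ofReal (u z)) ^ (1/q) ≤
      ENNReal.ofReal C * (∫⁻ x, (‖f x‖₊ : ℝ≥0∞) ^ p * ENNReal.ofReal (v x)) ^ (1/p)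

/-- Axis-parallel cube with center `c` and half-side `r`. -/
def axisCube {n : ℕ} (c : Euc n) (r : ℝ) : Set (Euc n) :=
  {x | ∀ i, |x i - c i| ≤ r}

/-- An axis-parallel cube. -/
def IsCube {n : ℕ} (Q : Set (Euc n)) : Prop :=
  ∃ (c : Euc n) (r : ℝ), 0 < r ∧ Q = axisCube c r

/-- Comparability of measures: `(μ₁,μ₂) ∈ C(δ)`. -/
def Compar {n : ℕ} (μ₁ μ₂ : Measure (Euc n)) (δ : ℝ) : Prop :=
  ∃ C : ℝ, 0 < C ∧ ∀ Q : Set (Euc n), IsCube Q → ∀ E ⊆ Q, MeasurableSet E →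
    μ₁ E * μ₂ Q ^ δ ≤ ENNReal.ofReal C * (μ₁ Q * μ₂ E ^ δ)

/-- A doubling measure. -/
def Doubling {n : ℕ} (μ : Measure (Euc n)) : Prop :=
  ∃ C : ℝ, 0 < C ∧ ∀ (c : Euc n) (r : ℝ), 0 < r →
    μ (axisCube c (2 * r)) ≤ ENNReal.ofReal C * μ (axisCube c r)

/-- `(u, |·|) ∈ C(δ)`. -/
def ComparWL {n : ℕ} (u : Euc n → ℝ) (δ : ℝ) : Prop :=
  ∃ C : ℝ, 0 < C ∧ ∀ Q : Set (Euc n), IsCube Q → ∀ E ⊆ Q, MeasurableSet E →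
    wMeas u E * volume Q ^ δ ≤ ENNReal.ofReal C * (wMeas u Q * volume E ^ δ)

/-- `(|·|, v) ∈ C(δ)`. -/
def ComparLW {n : ℕ} (v : Euc n → ℝ) (δ : ℝ) : Prop :=
  ∃ C : ℝ, 0 < C ∧ ∀ Q : Set (Euc n), IsCube Q → ∀ E ⊆ Q, MeasurableSet E →
    volume E * wMeas v Q ^ δ ≤ ENNReal.ofReal C * (volume Q * wMeas v E ^ δ)

/-- The class `N_Q(p,q)`. -/
def NQ {n : ℕ} (p q : ℝ) (u v : Euc n → ℝ) : Prop :=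
  ∃ C : ℝ, 0 < C ∧ ∀ Q : Set (Euc n), IsCube Q → ∀ μ : Euc n, -μ ∈ Q → ∀ τ : Euc n,
    wMeas u Q ^ (1/q) * wMeas (wFun p v) (setTranslate τ (polarSet (setTranslate μ Q))) ^ (1 / rconj p)
        ≤ ENNReal.ofReal C ∧
    wMeas u (setTranslate τ (polarSet (setTranslate μ Q))) ^ (1/q) * wMeas (wFun p v) Q ^ (1 / rconj p)
        ≤ ENNReal.ofReal C

/-- The class `N_{Q'}(p,q)`. -/
def NQ' {n : ℕ} (p q : ℝ) (u v : Euc n → ℝ) : Prop :=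
  ∃ C : ℝ, 0 < C ∧ ∀ Q : Set (Euc n), IsCube Q → ∀ μ : Euc n, -μ ∈ Q → ∀ τ : Euc n,
    wMeas u Q ^ (1/q) * volume (polarSet Q)
        ≤ ENNReal.ofReal C * wMeas v (setTranslate τ (polarSet (setTranslate μ Q))) ^ (1/p) ∧
    wMeas u (setTranslate τ (polarSet (setTranslate μ Q))) ^ (1/q) * volume Q
        ≤ ENNReal.ofReal C * wMeas v Q ^ (1/p)

/-- A rectanguloid centered at the origin. -/
def IsRectanguloid0 {n : ℕ} (R : Set (Euc n)) : Prop :=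
  ∃ (b : OrthonormalBasis (Fin n) ℝ (Euc n)) (a : Fin n → ℝ),
    (∀ i, 0 < a i) ∧ R = {x | ∀ i, |(inner ℝ x (b i) : ℝ)| ≤ a i}

/-- An ellipsoid centered at the origin. -/
def IsEllipsoid0 {n : ℕ} (S : Set (Euc n)) : Prop :=
  ∃ T : Euc n ≃ₗ[ℝ] Euc n, S = ⇑T '' Metric.closedBall 0 1


lemma ellipsoid_sandwich {n : ℕ} (hn : 1 ≤ n) {S : Set (Euc n)} (hS : IsEllipsoid0 S) :
    ∃ R : Set (Euc n), IsRectanguloid0 R ∧ R ⊆ S ∧ S ⊆ Real.sqrt n • R := by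
  obtain ⟨T, rfl⟩ := hS
  have hnpos : (0:ℝ) < n := by exact_mod_cast Nat.pos_of_ne_zero (by omega)
  set L : Euc n →ₗ[ℝ] Euc n := (T.symm : Euc n →ₗ[ℝ] Euc n) with hLdef
  set A : Euc n →ₗ[ℝ] Euc n := LinearMap.adjoint L ∘ₗ L with hAdef
  have hA : A.IsSymmetric := fun x y => by
    simp only [hAdef, LinearMap.comp_apply, LinearMap.adjoint_inner_left,
      LinearMap.adjoint_inner_right]
  set b := hA.eigenvectorBasis finrank_euclideanSpace_fin with hbdef
  set μ := hA.eigenvalues finrank_euclideanSpace_fin with hμdef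
  have hAb : ∀ i, A (b i) = μ i • b i := fun i =>
    hA.apply_eigenvectorBasis finrank_euclideanSpace_fin i
  have hAx : ∀ x : Euc n, (inner ℝ (A x) x : ℝ) = ‖L x‖ ^ 2 := fun x => by
    rw [hAdef, LinearMap.comp_apply, LinearMap.adjoint_inner_left,
      real_inner_self_eq_norm_sq, sq]
  have hsum : ∀ x : Euc n, (inner ℝ (A x) x : ℝ) = ∑ i, μ i * (inner ℝ x (b i) : ℝ) ^ 2 := by
    intro x
    rw [← b.sum_inner_mul_inner (A x) x]
    refine Finset.sum_congr rfl fun i _ => ?_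
    rw [hA x (b i), hAb i, real_inner_smul_right, real_inner_comm (b i) x]
    ring
  have hμpos : ∀ i, 0 < μ i := by
    intro i
    have h1 : (inner ℝ (A (b i)) (b i) : ℝ) = μ i := by
      rw [hAb i, real_inner_smul_left, real_inner_self_eq_norm_sq, b.orthonormal.1 i]
      ring
    have h2 : L (b i) ≠ 0 := by
      intro h
      have hb0 : b i = 0 := by
        have := congrArg T h
        simpa [hLdef] using this
      have hb1 := b.orthonormal.1 i
      rw [hb0, norm_zero] at hb1
      exact one_ne_zero hb1.symm
    have h3 := hAx (b i)
    rw [h1] at h3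
    rw [h3]
    exact pow_pos (norm_pos_iff.mpr h2) 2
  have hmemS : ∀ x : Euc n, x ∈ ⇑T '' Metric.closedBall 0 1 ↔
      ∑ i, μ i * (inner ℝ x (b i) : ℝ) ^ 2 ≤ 1 := by
    intro x
    rw [← hsum, hAx]
    constructor
    · rintro ⟨y, hy, rfl⟩
      have h1 : ‖y‖ ≤ 1 := by simpa using hy
      have h2 : L (T y) = y := by simp [hLdef]
      rw [h2]
      nlinarith [norm_nonneg y]
    · intro h
      refine ⟨T.symm x, ?_, T.apply_symm_apply x⟩
      have h2 : L x = T.symm x := by simp [hLdef]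
      rw [h2] at h
      simpa using (by nlinarith [norm_nonneg (T.symm x)] : ‖T.symm x‖ ≤ 1)
  set a : Fin n → ℝ := fun i => Real.sqrt (1 / (n * μ i)) with hadef
  have hapos : ∀ i, 0 < a i := fun i =>
    Real.sqrt_pos.mpr (by have := hμpos i; positivity)
  have ha2 : ∀ i, a i ^ 2 = 1 / (n * μ i) := fun i =>
    Real.sq_sqrt (by have := hμpos i; positivity)
  refine ⟨{x | ∀ i, |(inner ℝ x (b i) : ℝ)| ≤ a i}, ⟨b, a, hapos, rfl⟩, ?_, ?_⟩
  · intro x hx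
    rw [hmemS x]
    calc ∑ i, μ i * (inner ℝ x (b i) : ℝ) ^ 2 ≤ ∑ i : Fin n, μ i * a i ^ 2 := by
          refine Finset.sum_le_sum fun i _ => ?_
          have := abs_le.mp (hx i)
          exact mul_le_mul_of_nonneg_left (sq_le_sq' this.1 this.2) (hμpos i).le
      _ = ∑ i : Fin n, (1 / n : ℝ) := by
          refine Finset.sum_congr rfl fun i _ => ?_
          have h0 : (n:ℝ) ≠ 0 := hnpos.ne'
          have hμ0 : μ i ≠ 0 := (hμpos i).ne'
          rw [ha2 i]
          field_simp
      _ = 1 := by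
          rw [Finset.sum_const, Finset.card_univ, Fintype.card_fin, nsmul_eq_mul]
          field_simp
  · intro x hx
    rw [hmemS x] at hx
    have hsqrtpos : (0:ℝ) < Real.sqrt n := Real.sqrt_pos.mpr hnpos
    rw [Set.mem_smul_set_iff_inv_smul_mem₀ hsqrtpos.ne']
    intro i
    have hterm : μ i * (inner ℝ x (b i) : ℝ) ^ 2 ≤ 1 := by
      refine le_trans (Finset.single_le_sum (f := fun j => μ j * (inner ℝ x (b j) : ℝ) ^ 2)
        (fun j _ => ?_) (Finset.mem_univ i)) hx
      have := hμpos j; positivity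
    have hc2 : (inner ℝ x (b i) : ℝ) ^ 2 ≤ (Real.sqrt n * a i) ^ 2 := by
      have h1 : (Real.sqrt n * a i) ^ 2 = 1 / μ i := by
        have h0 : (n:ℝ) ≠ 0 := hnpos.ne'
        have hμ0 : μ i ≠ 0 := (hμpos i).ne'
        rw [mul_pow, Real.sq_sqrt hnpos.le, ha2 i]
        field_simp
      rw [h1, le_div_iff₀ (hμpos i), mul_comm]
      exact hterm
    have habs : |(inner ℝ x (b i) : ℝ)| ≤ Real.sqrt n * a i := by
      have := Real.sqrt_le_sqrt hc2
      rw [Real.sqrt_sq_eq_abs, Real.sqrt_sq (by positivity)] at this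
      exact this
    have hin : (inner ℝ ((Real.sqrt n)⁻¹ • x) (b i) : ℝ) =
        (Real.sqrt n)⁻¹ * (inner ℝ x (b i) : ℝ) := real_inner_smul_left _ _ _
    rw [hin, abs_mul, abs_inv, abs_of_pos hsqrtpos, inv_mul_le_iff₀ hsqrtpos]
    exact habs


lemma ellipsoid_wMeas_mono {n : ℕ} (u : Euc n → ℝ) {A B : Set (Euc n)} (h : A ⊆ B) :
    wMeas u A ≤ wMeas u B := lintegral_mono_set h

theorem stmt5 (n : ℕ) (hn : 2 ≤ n) (p q : ℝ) (hp : 1 < p) (hq : 1 < q)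
    (u v : Euc n → ℝ) (hu : IsWeight u) (hv : IsWeight v)
    (hvpos : ∀ᵐ x ∂(volume : Measure (Euc n)), 0 < v x)
    (hyp : ∃ C : ℝ, 0 < C ∧ ∀ R : Set (Euc n), IsRectanguloid0 R →
      wMeas u (polarSet R) ^ (1/q) * wMeas (wFun p v) ((n : ℝ) • R) ^ (1 / rconj p)
          ≤ ENNReal.ofReal C ∧
      wMeas u ((n : ℝ) • R) ^ (1/q) * wMeas (wFun p v) (polarSet R) ^ (1 / rconj p)
          ≤ ENNReal.ofReal C) :
    ∃ C' : ℝ, 0 < C' ∧ ∀ S : Set (Euc n), IsEllipsoid0 S →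
      wMeas u (polarSet S) ^ (1/q) * wMeas (wFun p v) (Real.sqrt n • S) ^ (1 / rconj p)
          ≤ ENNReal.ofReal C' ∧
      wMeas u (Real.sqrt n • S) ^ (1/q) * wMeas (wFun p v) (polarSet S) ^ (1 / rconj p)
          ≤ ENNReal.ofReal C' := by
  obtain ⟨C, hC, hR⟩ := hyp
  refine ⟨C, hC, fun S hS => ?_⟩
  obtain ⟨R, hRrect, hRS, hSR⟩ := ellipsoid_sandwich (by omega) hS
  have hq0 : (0:ℝ) ≤ 1/q := by positivity
  have hp0 : (0:ℝ) ≤ 1 / rconj p := by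
    have h1 : 0 < rconj p := div_pos (by linarith) (by linarith)
    exact (one_div_pos.mpr h1).le
  have hpolar : polarSet S ⊆ polarSet R := fun z hz x hx => hz x (hRS hx)
  have hns : Real.sqrt n • S ⊆ (n:ℝ) • R := by
    have h1 : Real.sqrt n • S ⊆ Real.sqrt n • (Real.sqrt n • R) := Set.smul_set_mono hSR
    rwa [smul_smul, Real.mul_self_sqrt (Nat.cast_nonneg n)] at h1
  obtain ⟨hI1, hI2⟩ := hR R hRrect
  constructor
  · refine le_trans ?_ hI1
    exact mul_le_mul' (ENNReal.rpow_le_rpow (ellipsoid_wMeas_mono u hpolar) hq0)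
      (ENNReal.rpow_le_rpow (ellipsoid_wMeas_mono _ hns) hp0)
  · refine le_trans ?_ hI2
    exact mul_le_mul' (ENNReal.rpow_le_rpow (ellipsoid_wMeas_mono u hns) hq0)
      (ENNReal.rpow_le_rpow (ellipsoid_wMeas_mono _ hpolar) hp0)
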